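/- For every integer n ≥ 1, the central binomial coefficient satisfies C(2n, n) = ( ⌊ (1 + 2^(2n))^(2n) / 2^(2n²) ⌋ ) mod 2^(2n). -/

import Mathlib

open Finset

lemma aux_sum_lt (b : ℕ) (a : ℕ → ℕ) (h : ∀ i, a i < b) :
    ∀ n, ∑ i ∈ range n, a i * b ^ i < b ^ n := by
  intro n
  induction n with
  | zero => simp
  | succ n ih =>
    rw [Finset.sum_range_succ, pow_succ]
    calc ∑ i ∈ range n, a i * b ^ i + a n * b ^ n
        < b ^ n + a n * b ^ n := by omega
      _ = (a n + 1) * b ^ n := by ring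
      _ ≤ b * b ^ n := Nat.mul_le_mul_right _ (h n)
      _ = b ^ n * b := by ring

/-- Arithmetic-term representation of the central binomial coefficient. -/
theorem stmt_4 (n : ℕ) (hn : 1 ≤ n) :
    Nat.choose (2 * n) n = ((1 + 2 ^ (2 * n)) ^ (2 * n) / 2 ^ (2 * n ^ 2)) % 2 ^ (2 * n) := by
  set B := 2 ^ (2 * n) with hB
  have hBpos : 0 < B := Nat.pow_pos (by norm_num)
  have hpow : (2 : ℕ) ^ (2 * n ^ 2) = B ^ n := by
    rw [hB, ← pow_mul]; ring_nf
  -- binomial expansion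
  have hexp : (1 + B) ^ (2 * n) = ∑ k ∈ range (2 * n + 1), Nat.choose (2 * n) k * B ^ k := by
    rw [add_comm 1 B, add_pow]
    apply Finset.sum_congr rfl
    intro k hk
    simp [mul_comm]
  -- central binomial coefficient is less than B
  have hlt : ∀ k, Nat.choose (2 * n) k < B := by
    intro k
    have hsum : ∑ k ∈ range (2 * n + 1), Nat.choose (2 * n) k = B := by
      rw [hB, Nat.sum_range_choose, pow_mul]
    rcases Nat.lt_or_ge k (2 * n + 1) with hk | hk
    · rcases Nat.eq_zero_or_pos k with rfl | hk0
      · rw [Nat.choose_zero_right, hB]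
        exact Nat.one_lt_two_pow (by omega)
      · rw [← hsum]
        refine Finset.single_lt_sum (i := k) (j := 0) (by omega)
          (Finset.mem_range.mpr hk) (by simp) (by simp) ?_
        intro l _ _
        exact Nat.zero_le _
    · rw [Nat.choose_eq_zero_of_lt (by omega)]
      exact hBpos
  -- split the sum
  have hsplit : (1 + B) ^ (2 * n) =
      (∑ k ∈ range n, Nat.choose (2 * n) k * B ^ k) +
      B ^ n * (∑ j ∈ range (n + 1), Nat.choose (2 * n) (n + j) * B ^ j) := by
    rw [hexp]
    have h2 : 2 * n + 1 = n + (n + 1) := by omega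
    rw [h2, Finset.sum_range_add, Finset.mul_sum]
    congr 1
    apply Finset.sum_congr rfl
    intro j _
    rw [pow_add]; ring
  have hL : (∑ k ∈ range n, Nat.choose (2 * n) k * B ^ k) < B ^ n :=
    aux_sum_lt B _ (fun i => hlt i) n
  rw [hpow, hsplit, Nat.add_mul_div_left _ _ (Nat.pow_pos hBpos),
    Nat.div_eq_of_lt hL, Nat.zero_add]
  -- now compute the mod
  rw [Finset.sum_range_succ']
  simp only [Nat.add_zero, pow_zero, mul_one]
  have hS : (∑ i ∈ range n, Nat.choose (2 * n) (n + (i + 1)) * B ^ (i + 1)) =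
      B * ∑ i ∈ range n, Nat.choose (2 * n) (n + (i + 1)) * B ^ i := by
    rw [Finset.mul_sum]
    apply Finset.sum_congr rfl
    intro i _
    rw [pow_succ]; ring
  rw [hS, Nat.mul_add_mod, Nat.mod_eq_of_lt (hlt n)]
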